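/- For every positive integer r, ζ({2}^r) = π^(2r) / (2r+1)!. -/

import Mathlib

open Finset Filter Real Topology

/-- The multiple zeta value `ζ(s₁,…,s_d) = ∑_{k₁ > k₂ > ⋯ > k_d ≥ 1} 1/(k₁^{s₁} ⋯ k_d^{s_d})`. -/
noncomputable def mzv (s : List ℕ) : ℝ :=
  ∑' k : {k : Fin s.length → ℕ // StrictAnti k ∧ ∀ i, 0 < k i},
    ∏ i, 1 / ((k.1 i : ℝ) ^ s.get i)

namespace ZTP


noncomputable def e (n r : ℕ) : ℝ :=
  ∑ S ∈ Finset.powersetCard r (Finset.range n), ∏ i ∈ S, (1 : ℝ) / ((i : ℝ) + 1) ^ 2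

lemma prod_one_add_eq (n : ℕ) (x : ℝ) :
    ∏ i ∈ Finset.range n, (1 + x * (1 / ((i : ℝ) + 1) ^ 2)) =
      ∑ r ∈ Finset.range (n + 1), e n r * x ^ r := by
  have h1 : ∀ i : ℕ, (1 : ℝ) + x * (1 / ((i : ℝ) + 1) ^ 2)
      = x * (1 / ((i : ℝ) + 1) ^ 2) + 1 := fun i => by ring
  simp only [h1]
  rw [Finset.prod_add]
  simp only [Finset.prod_const_one, mul_one]
  rw [Finset.sum_powerset, Finset.card_range]
  apply Finset.sum_congr rfl
  intro r hr
  rw [e, Finset.sum_mul]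
  apply Finset.sum_congr rfl
  intro S hS
  rw [Finset.prod_mul_distrib, Finset.prod_const, (Finset.mem_powersetCard.mp hS).2]
  ring

lemma sum_range_inv_sq_le (n : ℕ) : ∑ i ∈ Finset.range n, (1 : ℝ) / ((i : ℝ) + 1) ^ 2 ≤ 2 := by
  have hsum := hasSum_zeta_two
  have hnn : ∀ j : ℕ, 0 ≤ (1 : ℝ) / (j : ℝ) ^ 2 := fun j => by positivity
  have h1 : ∑ i ∈ Finset.range n, (1 : ℝ) / ((i : ℝ) + 1) ^ 2
      = ∑ j ∈ (Finset.range n).image Nat.succ, (1 : ℝ) / (j : ℝ) ^ 2 := by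
    rw [Finset.sum_image (fun a _ b _ h => Nat.succ_injective h)]
    apply Finset.sum_congr rfl
    intro i _
    push_cast
    ring_nf
  rw [h1]
  have h2 := hsum.summable
  calc ∑ j ∈ (Finset.range n).image Nat.succ, (1 : ℝ) / (j : ℝ) ^ 2
      ≤ ∑' j : ℕ, (1 : ℝ) / (j : ℝ) ^ 2 := Summable.sum_le_tsum _ (fun j _ => hnn j) h2
    _ = π ^ 2 / 6 := hsum.tsum_eq
    _ ≤ 2 := by nlinarith [Real.pi_lt_d2, Real.pi_pos]

lemma e_zero_of_lt {n r : ℕ} (h : n < r) : e n r = 0 := by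
  rw [e, Finset.powersetCard_eq_empty.mpr (by simpa using h), Finset.sum_empty]

lemma e_le (n r : ℕ) : e n r ≤ Real.exp 2 := by
  have key : ∑ k ∈ Finset.range (n + 1), e n k ≤ Real.exp 2 := by
    have := prod_one_add_eq n 1
    simp only [mul_one, one_pow, one_mul] at this
    rw [← this]
    calc ∏ i ∈ Finset.range n, (1 + 1 / ((i : ℝ) + 1) ^ 2)
        ≤ ∏ i ∈ Finset.range n, Real.exp (1 / ((i : ℝ) + 1) ^ 2) := by
          apply Finset.prod_le_prod
          · intro i _; positivity
          · intro i _
            rw [add_comm]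
            exact Real.add_one_le_exp _
      _ = Real.exp (∑ i ∈ Finset.range n, 1 / ((i : ℝ) + 1) ^ 2) :=
          (Real.exp_sum _ _).symm
      _ ≤ Real.exp 2 := Real.exp_le_exp.mpr (sum_range_inv_sq_le n)
  rcases le_or_gt r n with h | h
  · refine le_trans ?_ key
    apply Finset.single_le_sum (f := fun k => e n k)
    · intro k _
      exact Finset.sum_nonneg fun S _ => Finset.prod_nonneg fun i _ => by positivity
    · exact Finset.mem_range.mpr (Nat.lt_succ_of_le h)
  · rw [e_zero_of_lt h]
    positivity

lemma e_nonneg (n r : ℕ) : 0 ≤ e n r :=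
  Finset.sum_nonneg fun S _ => Finset.prod_nonneg fun i _ => by positivity

lemma e_mono (r : ℕ) : Monotone fun n => e n r := by
  apply monotone_nat_of_le_succ
  intro n
  apply Finset.sum_le_sum_of_subset_of_nonneg
  · exact Finset.powersetCard_mono (Finset.range_subset_range.mpr (Nat.le_succ n))
  · intro S _ _
    exact Finset.prod_nonneg fun i _ => by positivity

noncomputable def c (r : ℕ) : ℝ := ⨆ n, e n r

lemma c_tendsto (r : ℕ) : Tendsto (fun n => e n r) atTop (𝓝 (c r)) :=
  tendsto_atTop_ciSup (e_mono r) ⟨Real.exp 2, by rintro _ ⟨n, rfl⟩; exact e_le n r⟩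

lemma e_le_c (n r : ℕ) : e n r ≤ c r :=
  le_ciSup (f := fun n => e n r) ⟨Real.exp 2, by rintro _ ⟨n, rfl⟩; exact e_le n r⟩ n

lemma c_le (r : ℕ) : c r ≤ Real.exp 2 := ciSup_le fun n => e_le n r

lemma c_nonneg (r : ℕ) : 0 ≤ c r := (e_nonneg 0 r).trans (e_le_c 0 r)

def K (r : ℕ) := {k : Fin r → ℕ // StrictAnti k ∧ ∀ i, 0 < k i}

noncomputable def f {r : ℕ} (k : K r) : ℝ := ∏ i, (1 : ℝ) / ((k.1 i : ℝ)) ^ 2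

lemma f_nonneg {r : ℕ} (k : K r) : 0 ≤ f k :=
  Finset.prod_nonneg fun i _ => by positivity

/-- the finset of values, shifted down by one -/
def phi {r : ℕ} (k : K r) : Finset ℕ := Finset.image (fun i => k.1 i - 1) Finset.univ

lemma sub_one_injective {r : ℕ} (k : K r) :
    Function.Injective (fun i => k.1 i - 1) := by
  intro i j h
  simp only at h
  apply k.2.1.injective
  have hi := k.2.2 i
  have hj := k.2.2 j
  omega

lemma phi_card {r : ℕ} (k : K r) : (phi k).card = r := by
  rw [phi, Finset.card_image_of_injective _ (sub_one_injective k), Finset.card_univ,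
    Fintype.card_fin]

lemma prod_phi {r : ℕ} (k : K r) :
    ∏ m ∈ phi k, (1 : ℝ) / ((m : ℝ) + 1) ^ 2 = f k := by
  rw [phi, Finset.prod_image (fun i _ j _ h => sub_one_injective k h)]
  apply Finset.prod_congr rfl
  intro i _
  have : (k.1 i - 1 : ℕ) + 1 = k.1 i := Nat.succ_pred_eq_of_pos (k.2.2 i)
  rw [show ((k.1 i - 1 : ℕ) : ℝ) + 1 = ((k.1 i : ℕ) : ℝ) by exact_mod_cast congrArg (Nat.cast : ℕ → ℝ) this]

lemma strictMono_aux {r : ℕ} (k : K r) : StrictMono (fun i => k.1 (Fin.rev i) - 1) := by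
  intro i j hij
  have h1 := k.2.1 (Fin.rev_lt_rev.mpr hij)
  have h2 := k.2.2 (Fin.rev i)
  have h3 := k.2.2 (Fin.rev j)
  simp only
  omega

lemma range_aux {r : ℕ} (k : K r) :
    Set.range (fun i => k.1 (Fin.rev i) - 1) = ↑(phi k) := by
  rw [phi]
  ext m
  simp only [Set.mem_range, Finset.coe_image, Set.mem_image, Finset.mem_coe,
    Finset.coe_univ, Set.image_univ]
  constructor
  · rintro ⟨i, rfl⟩; exact ⟨Fin.rev i, rfl⟩
  · rintro ⟨i, rfl⟩; exact ⟨Fin.rev i, by rw [Fin.rev_rev]⟩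

lemma phi_injective {r : ℕ} : Function.Injective (phi (r := r)) := by
  intro k k' h
  have hr : Set.range (fun i => k.1 (Fin.rev i) - 1)
      = Set.range (fun i => k'.1 (Fin.rev i) - 1) := by
    rw [range_aux, range_aux, h]
  haveI : WellFoundedLT (Fin r) := inferInstance
  have heq : (fun i => k.1 (Fin.rev i) - 1) = (fun i => k'.1 (Fin.rev i) - 1) :=
    ((strictMono_aux k).range_inj (strictMono_aux k')).mp hr
  apply Subtype.ext
  funext i
  have := congrFun heq (Fin.rev i)
  simp only [Fin.rev_rev] at this
  have hki := k.2.2 i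
  have hki' := k'.2.2 i
  omega

/-- inverse construction: from a finset of card r inside `range n`. -/
noncomputable def psi {r : ℕ} (S : Finset ℕ) (h : S.card = r) : K r :=
  ⟨fun i => S.orderEmbOfFin h (Fin.rev i) + 1,
    fun i j hij => by
      simpa using Nat.add_lt_add_right ((S.orderEmbOfFin h).strictMono (Fin.rev_lt_rev.mpr hij)) 1,
    fun i => Nat.succ_pos _⟩

lemma f_psi {r : ℕ} (S : Finset ℕ) (h : S.card = r) :
    f (psi S h) = ∏ m ∈ S, (1 : ℝ) / ((m : ℝ) + 1) ^ 2 := by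
  rw [f, psi]
  simp only [Nat.cast_add, Nat.cast_one]
  rw [Fintype.prod_bijective Fin.rev Fin.rev_bijective
    (fun x => (1:ℝ) / ((S.orderEmbOfFin h x.rev : ℝ) + 1) ^ 2)
    (fun x => (1:ℝ) / ((S.orderEmbOfFin h x : ℝ) + 1) ^ 2)
    (fun x => rfl)]
  apply Finset.prod_bij (fun i _ => S.orderEmbOfFin h i)
  · intro i _; exact Finset.orderEmbOfFin_mem S h i
  · intro i _ j _ hij; exact (S.orderEmbOfFin h).injective hij
  · intro m hm
    have : m ∈ Set.range (S.orderEmbOfFin h) := by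
      rw [Finset.range_orderEmbOfFin]; exact hm
    obtain ⟨i, hi⟩ := this
    exact ⟨i, Finset.mem_univ i, hi⟩
  · intro i _
    rfl

lemma phi_psi {r : ℕ} (S : Finset ℕ) (h : S.card = r) : phi (psi S h) = S := by
  ext m
  rw [phi]
  simp only [Finset.mem_image, Finset.mem_univ, true_and, psi]
  constructor
  · rintro ⟨i, rfl⟩
    simpa using Finset.orderEmbOfFin_mem S h (Fin.rev i)
  · intro hm
    have : m ∈ Set.range (S.orderEmbOfFin h) := by
      rw [Finset.range_orderEmbOfFin]; exact hm
    obtain ⟨i, hi⟩ := this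
    exact ⟨Fin.rev i, by rw [Fin.rev_rev, hi]; omega⟩

lemma hasSum_f (r : ℕ) : HasSum (f (r := r)) (c r) := by
  classical
  apply hasSum_of_isLUB_of_nonneg _ f_nonneg
  constructor
  · rintro _ ⟨s, rfl⟩
    set n : ℕ := s.sup (fun k => Finset.univ.sup k.1) with hn
    have hsub : s.image phi ⊆ Finset.powersetCard r (Finset.range n) := by
      intro S hS
      obtain ⟨k, hk, rfl⟩ := Finset.mem_image.mp hS
      rw [Finset.mem_powersetCard]
      refine ⟨?_, phi_card k⟩
      intro m hm
      rw [phi, Finset.mem_image] at hm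
      obtain ⟨i, _, rfl⟩ := hm
      rw [Finset.mem_range]
      have h1 : k.1 i ≤ n := le_trans (Finset.le_sup (Finset.mem_univ i))
        (Finset.le_sup (f := fun k : K r => Finset.univ.sup k.1) hk)
      have h2 := k.2.2 i
      omega
    calc ∑ k ∈ s, f k
        = ∑ S ∈ s.image phi, ∏ m ∈ S, (1 : ℝ) / ((m : ℝ) + 1) ^ 2 := by
          rw [Finset.sum_image (fun k _ k' _ h => phi_injective h)]
          exact (Finset.sum_congr rfl fun k _ => (prod_phi k)).symm
      _ ≤ e n r := Finset.sum_le_sum_of_subset_of_nonneg hsub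
          (fun S _ _ => Finset.prod_nonneg fun m _ => by positivity)
      _ ≤ c r := e_le_c n r
  · intro b hb
    refine ciSup_le fun n => ?_
    have key : e n r = ∑ k ∈ (Finset.powersetCard r (Finset.range n)).attach.image
        (fun S => psi S.1 (Finset.mem_powersetCard.mp S.2).2), f k := by
      rw [Finset.sum_image]
      · rw [e, ← Finset.sum_attach (Finset.powersetCard r (Finset.range n))
          (fun S => ∏ i ∈ S, (1 : ℝ) / ((i : ℝ) + 1) ^ 2)]
        exact Finset.sum_congr rfl fun S _ => (f_psi S.1 _).symm
      · intro S _ S' _ h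
        simp only at h
        apply Subtype.ext
        rw [← phi_psi S.1 (Finset.mem_powersetCard.mp S.2).2,
          ← phi_psi S'.1 (Finset.mem_powersetCard.mp S'.2).2, h]
    rw [key]
    exact hb ⟨_, rfl⟩
lemma mzv_eq_tsum_f (r : ℕ) : mzv (List.replicate r 2) = ∑' k : K r, f k := by
  rw [mzv]
  have hlen : (List.replicate r 2).length = r := List.length_replicate
  have hget : ∀ i : Fin (List.replicate r 2).length, (List.replicate r 2).get i = 2 :=
    fun i => by simp [List.get_eq_getElem]
  simp only [hget]
  let E : K r ≃ {k : Fin (List.replicate r 2).length → ℕ // StrictAnti k ∧ ∀ i, 0 < k i} :=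
    { toFun := fun k => ⟨fun i => k.1 (Fin.cast hlen i),
        fun i j hij => k.2.1 (show Fin.cast hlen i < Fin.cast hlen j from hij), fun i => k.2.2 _⟩
      invFun := fun k => ⟨fun i => k.1 (Fin.cast hlen.symm i),
        fun i j hij => k.2.1 (show Fin.cast hlen.symm i < Fin.cast hlen.symm j from hij), fun i => k.2.2 _⟩
      left_inv := fun k => by apply Subtype.ext; funext i; rfl
      right_inv := fun k => by apply Subtype.ext; funext i; rfl }
  rw [← Equiv.tsum_eq E (fun k => ∏ i, 1 / ((k.1 i : ℝ) ^ 2))]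
  apply tsum_congr
  intro k
  rw [f]
  rw [← Equiv.prod_comp (finCongr hlen) (fun i => (1:ℝ) / ((k.1 i : ℝ)) ^ 2)]
  rfl
noncomputable def b (r : ℕ) : ℝ := Real.pi ^ (2 * r) / (Nat.factorial (2 * r + 1) : ℝ)

lemma hasSum_sinc (x : ℝ) (hx : x ≠ 0) :
    HasSum (fun r : ℕ => (-(x ^ 2)) ^ r * b r) (Real.sin (Real.pi * x) / (Real.pi * x)) := by
  have hpx : Real.pi * x ≠ 0 := mul_ne_zero Real.pi_ne_zero hx
  have h := (Real.hasSum_sin (Real.pi * x)).div_const (Real.pi * x)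
  convert h using 2 with r
  · rfl
  rw [b]
  have hfac : ((Nat.factorial (2 * r + 1) : ℝ)) ≠ 0 := Nat.cast_ne_zero.mpr (Nat.factorial_ne_zero _)
  rw [pow_succ (Real.pi * x) (2 * r), mul_pow, pow_mul, pow_mul]
  field_simp
  ring

lemma summable_c (x : ℝ) (hx1 : |x| < 1) : Summable (fun r : ℕ => (-(x ^ 2)) ^ r * c r) := by
  have hx2 : x ^ 2 < 1 := by nlinarith [sq_abs x, abs_nonneg x]
  apply Summable.of_norm_bounded (g := fun r => Real.exp 2 * (x ^ 2) ^ r)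
  · exact (summable_geometric_of_lt_one (by positivity) hx2).mul_left _
  · intro r
    have h1 : ‖(-(x ^ 2)) ^ r * c r‖ = (x ^ 2) ^ r * |c r| := by
      rw [norm_mul, norm_pow, norm_neg, Real.norm_eq_abs,
        abs_of_nonneg (by positivity : (0:ℝ) ≤ x ^ 2), Real.norm_eq_abs]
    rw [h1, abs_of_nonneg (c_nonneg r), mul_comm (Real.exp 2)]
    exact mul_le_mul_of_nonneg_left (c_le r) (by positivity)

lemma tsum_c_eq (x : ℝ) (hx : 0 < x) (hx1 : x < 1) :
    ∑' r : ℕ, (-(x ^ 2)) ^ r * c r = Real.sin (Real.pi * x) / (Real.pi * x) := by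
  have hx2 : x ^ 2 < 1 := by nlinarith
  -- the approximating family
  set F : ℕ → ℕ → ℝ := fun n r => if r ≤ n then (-(x ^ 2)) ^ r * e n r else 0 with hF
  have htendsto : Tendsto (fun n => ∑' r, F n r) atTop (𝓝 (∑' r, (-(x ^ 2)) ^ r * c r)) := by
    apply tendsto_tsum_of_dominated_convergence
      (bound := fun r => Real.exp 2 * (x ^ 2) ^ r)
    · exact (summable_geometric_of_lt_one (by positivity) hx2).mul_left _
    · intro r
      apply Tendsto.congr' (f₁ := fun n => (-(x ^ 2)) ^ r * e n r)
      · filter_upwards [eventually_ge_atTop r] with n hn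
        rw [hF]; simp only [if_pos hn]
      · exact (c_tendsto r).const_mul _
    · filter_upwards with n
      intro r
      simp only [hF]
      split_ifs with h
      · have h1 : ‖(-(x ^ 2)) ^ r * e n r‖ = (x ^ 2) ^ r * |e n r| := by
          rw [norm_mul, norm_pow, norm_neg, Real.norm_eq_abs,
            abs_of_nonneg (by positivity : (0:ℝ) ≤ x ^ 2), Real.norm_eq_abs]
        rw [h1, abs_of_nonneg (e_nonneg n r), mul_comm (Real.exp 2)]
        exact mul_le_mul_of_nonneg_left (e_le n r) (by positivity)
      · simp only [norm_zero]
        positivity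
  have heq : ∀ n, ∑' r, F n r = ∏ i ∈ Finset.range n, (1 - x ^ 2 / ((i : ℝ) + 1) ^ 2) := by
    intro n
    have : ∑' r, F n r = ∑ r ∈ Finset.range (n + 1), F n r := by
      apply tsum_eq_sum
      intro r hr
      simp only [Finset.mem_range, not_lt] at hr
      simp only [hF]
      rw [if_neg (by omega)]
    rw [this]
    have : ∀ i : ℕ, (1 : ℝ) - x ^ 2 / ((i : ℝ) + 1) ^ 2
        = 1 + (-(x ^ 2)) * (1 / ((i : ℝ) + 1) ^ 2) := fun i => by ring
    simp only [this]
    rw [prod_one_add_eq n (-(x ^ 2))]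
    apply Finset.sum_congr rfl
    intro r hr
    simp only [Finset.mem_range] at hr
    simp only [hF]
    rw [if_pos (by omega)]
    ring
  have hprod : Tendsto (fun n => ∏ i ∈ Finset.range n, (1 - x ^ 2 / ((i : ℝ) + 1) ^ 2))
      atTop (𝓝 (Real.sin (Real.pi * x) / (Real.pi * x))) := by
    have hpx : Real.pi * x ≠ 0 := mul_ne_zero Real.pi_ne_zero hx.ne'
    have := (Real.tendsto_euler_sin_prod x).div_const (Real.pi * x)
    apply this.congr
    intro n
    rw [mul_comm, mul_div_assoc, div_self hpx, mul_one]
  exact tendsto_nhds_unique (htendsto.congr heq) hprod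

lemma summable_pow (a : ℕ → ℝ) (M C y : ℝ) (hb : ∀ k, |a k| ≤ M * C ^ k)
    (hy : 0 ≤ y) (hC : 0 ≤ C) (hyC : y * C < 1 / 2) :
    Summable (fun k => a k * y ^ k) := by
  apply Summable.of_norm_bounded (g := fun k => M * (C * y) ^ k)
  · exact (summable_geometric_of_lt_one (by positivity) (by nlinarith)).mul_left _
  · intro k
    rw [norm_mul, Real.norm_eq_abs, Real.norm_eq_abs, abs_of_nonneg (by positivity : (0:ℝ) ≤ y ^ k),
      mul_pow]
    calc |a k| * y ^ k ≤ M * C ^ k * y ^ k :=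
          mul_le_mul_of_nonneg_right (hb k) (by positivity)
      _ = M * (C ^ k * y ^ k) := by ring

lemma a0_eq_zero (C M : ℝ) (hC : 1 ≤ C) (hM : 0 ≤ M) (a : ℕ → ℝ)
    (hb : ∀ k, |a k| ≤ M * C ^ k)
    (h : ∀ y : ℝ, 0 < y → y * C < 1 / 2 → ∑' k, a k * y ^ k = 0) : a 0 = 0 := by
  have hC0 : 0 ≤ C := le_trans zero_le_one hC
  have key : ∀ y : ℝ, 0 < y → y * C < 1 / 2 → |a 0| ≤ y * (2 * M * C) := by
    intro y hy hyC
    have hsum := summable_pow a M C y hb hy.le hC0 hyC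
    have h0 := h y hy hyC
    rw [Summable.tsum_eq_zero_add hsum] at h0
    simp only [pow_zero, mul_one] at h0
    have htail : ∑' k, a (k + 1) * y ^ (k + 1) = y * ∑' k, a (k + 1) * y ^ k := by
      rw [← tsum_mul_left]
      apply tsum_congr
      intro k
      ring
    rw [htail] at h0
    have hsum' : Summable (fun k => a (k + 1) * y ^ k) := by
      apply summable_pow (fun k => a (k + 1)) (M * C) C y _ hy.le hC0 hyC
      intro k
      calc |a (k + 1)| ≤ M * C ^ (k + 1) := hb (k + 1)
        _ = M * C * C ^ k := by ring
    have hCy1 : C * y < 1 := by nlinarith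
    have hCy0 : 0 ≤ C * y := by positivity
    have hbound : |∑' k, a (k + 1) * y ^ k| ≤ 2 * M * C := by
      have h1 : |∑' k, a (k + 1) * y ^ k| ≤ ∑' k, (M * C) * (C * y) ^ k := by
        refine le_trans (norm_tsum_le_tsum_norm hsum'.norm) ?_
        apply Summable.tsum_le_tsum _ hsum'.norm ((summable_geometric_of_lt_one hCy0 hCy1).mul_left _)
        intro k
        rw [norm_mul, Real.norm_eq_abs, Real.norm_eq_abs,
          abs_of_nonneg (by positivity : (0:ℝ) ≤ y ^ k), mul_pow]
        calc |a (k + 1)| * y ^ k ≤ (M * C ^ (k + 1)) * y ^ k :=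
              mul_le_mul_of_nonneg_right (hb (k + 1)) (by positivity)
          _ = M * C * (C ^ k * y ^ k) := by ring
      rw [tsum_mul_left, tsum_geometric_of_lt_one hCy0 hCy1] at h1
      have h2 : (1 - C * y)⁻¹ ≤ 2 := by
        rw [inv_le_comm₀ (by nlinarith) (by norm_num)]
        nlinarith
      calc |∑' k, a (k + 1) * y ^ k| ≤ M * C * (1 - C * y)⁻¹ := h1
        _ ≤ M * C * 2 := by nlinarith [mul_nonneg hM hC0]
        _ = 2 * M * C := by ring
    have : a 0 = -(y * ∑' k, a (k + 1) * y ^ k) := by linarith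
    rw [this, abs_neg, abs_mul, abs_of_nonneg hy.le]
    exact mul_le_mul_of_nonneg_left hbound hy.le
  by_contra hne
  have habs : 0 < |a 0| := abs_pos.mpr hne
  set y := min (1 / (4 * C)) (|a 0| / (4 * M * C + 1)) with hy
  have hy0 : 0 < y := lt_min (by positivity) (by positivity)
  have hyC : y * C < 1 / 2 := by
    calc y * C ≤ (1 / (4 * C)) * C := mul_le_mul_of_nonneg_right (min_le_left _ _) hC0
      _ = 1 / 4 := by field_simp
      _ < 1 / 2 := by norm_num
  have := key y hy0 hyC
  have hy2 : y ≤ |a 0| / (4 * M * C + 1) := min_le_right _ _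
  have hMC : 0 ≤ M * C := mul_nonneg hM hC0
  have : |a 0| ≤ (|a 0| / (4 * M * C + 1)) * (2 * M * C) := by
    calc |a 0| ≤ y * (2 * M * C) := this
      _ ≤ (|a 0| / (4 * M * C + 1)) * (2 * M * C) := by
          apply mul_le_mul_of_nonneg_right hy2 (by positivity)
  have hpos : 0 < 4 * M * C + 1 := by positivity
  rw [div_mul_eq_mul_div, le_div_iff₀ hpos] at this
  nlinarith

lemma all_eq_zero (C : ℝ) (hC : 1 ≤ C) (r : ℕ) :
    ∀ (a : ℕ → ℝ) (M : ℝ), 0 ≤ M → (∀ k, |a k| ≤ M * C ^ k) →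
      (∀ y : ℝ, 0 < y → y * C < 1 / 2 → ∑' k, a k * y ^ k = 0) → a r = 0 := by
  have hC0 : 0 ≤ C := le_trans zero_le_one hC
  induction r with
  | zero => exact fun a M hM hb h => a0_eq_zero C M hC hM a hb h
  | succ r ih =>
    intro a M hM hb h
    have ha0 : a 0 = 0 := a0_eq_zero C M hC hM a hb h
    have hb' : ∀ k, |a (k + 1)| ≤ (M * C) * C ^ k := by
      intro k
      calc |a (k + 1)| ≤ M * C ^ (k + 1) := hb (k + 1)
        _ = M * C * C ^ k := by ring
    have h' : ∀ y : ℝ, 0 < y → y * C < 1 / 2 → ∑' k, a (k + 1) * y ^ k = 0 := by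
      intro y hy hyC
      have h0 := h y hy hyC
      have hsum := summable_pow a M C y hb hy.le hC0 hyC
      rw [Summable.tsum_eq_zero_add hsum] at h0
      simp only [pow_zero, mul_one, ha0, zero_add] at h0
      have htail : ∑' k, a (k + 1) * y ^ (k + 1) = y * ∑' k, a (k + 1) * y ^ k := by
        rw [← tsum_mul_left]
        exact tsum_congr fun k => by ring
      rw [htail] at h0
      exact (mul_eq_zero.mp h0).resolve_left hy.ne'
    exact ih (fun k => a (k + 1)) (M * C) (mul_nonneg hM hC0) hb' h'

lemma b_nonneg (r : ℕ) : 0 ≤ b r := by rw [b]; positivity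

lemma b_le (r : ℕ) : b r ≤ 10 ^ r := by
  rw [b]
  have h1 : (1 : ℝ) ≤ (Nat.factorial (2 * r + 1) : ℝ) := by
    exact_mod_cast Nat.one_le_iff_ne_zero.mpr (Nat.factorial_ne_zero _)
  have h2 : Real.pi ^ (2 * r) ≤ 10 ^ r := by
    rw [pow_mul]
    apply pow_le_pow_left₀ (by positivity)
    nlinarith [Real.pi_lt_d2, Real.pi_pos]
  calc Real.pi ^ (2 * r) / (Nat.factorial (2 * r + 1) : ℝ) ≤ Real.pi ^ (2 * r) / 1 := by
        apply div_le_div_of_nonneg_left (by positivity) (by norm_num) h1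
    _ = Real.pi ^ (2 * r) := by ring
    _ ≤ 10 ^ r := h2

lemma c_eq_b (r : ℕ) : c r = b r := by
  set a : ℕ → ℝ := fun k => (-1) ^ k * (c k - b k) with ha
  have hbound : ∀ k, |a k| ≤ (Real.exp 2 + 1) * 10 ^ k := by
    intro k
    rw [ha]
    simp only
    rw [abs_mul, abs_pow, abs_neg, abs_one, one_pow, one_mul]
    have h1 : |c k - b k| ≤ |c k| + |b k| := abs_sub _ _
    rw [abs_of_nonneg (c_nonneg k), abs_of_nonneg (b_nonneg k)] at h1
    have h10 : (1 : ℝ) ≤ 10 ^ k := one_le_pow₀ (by norm_num)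
    calc |c k - b k| ≤ c k + b k := h1
      _ ≤ Real.exp 2 + 10 ^ k := add_le_add (c_le k) (b_le k)
      _ ≤ Real.exp 2 * 10 ^ k + 1 * 10 ^ k := by
          apply add_le_add
          · nlinarith [Real.exp_pos 2]
          · linarith
      _ = (Real.exp 2 + 1) * 10 ^ k := by ring
  have hzero : ∀ y : ℝ, 0 < y → y * 10 < 1 / 2 → ∑' k, a k * y ^ k = 0 := by
    intro y hy hyC
    have hy1 : y < 1 := by nlinarith
    set x := Real.sqrt y with hx
    have hx0 : 0 < x := Real.sqrt_pos.mpr hy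
    have hx1 : x < 1 := by
      rw [hx]
      rw [show (1 : ℝ) = Real.sqrt 1 from (Real.sqrt_one).symm]
      exact Real.sqrt_lt_sqrt hy.le hy1
    have hxy : x ^ 2 = y := Real.sq_sqrt hy.le
    have hterm : ∀ k, a k * y ^ k = (-(x ^ 2)) ^ k * c k - (-(x ^ 2)) ^ k * b k := by
      intro k
      rw [ha]
      simp only
      rw [← hxy, neg_pow (x ^ 2) k]
      ring
    have hxabs : |x| < 1 := by rw [abs_of_nonneg hx0.le]; exact hx1
    have hs1 : Summable (fun k : ℕ => (-(x ^ 2)) ^ k * c k) := summable_c x hxabs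
    have hs2 : Summable (fun k : ℕ => (-(x ^ 2)) ^ k * b k) := (hasSum_sinc x hx0.ne').summable
    calc ∑' k, a k * y ^ k
        = ∑' k, ((-(x ^ 2)) ^ k * c k - (-(x ^ 2)) ^ k * b k) := tsum_congr hterm
      _ = (∑' k, (-(x ^ 2)) ^ k * c k) - ∑' k, (-(x ^ 2)) ^ k * b k := Summable.tsum_sub hs1 hs2
      _ = 0 := by
          rw [tsum_c_eq x hx0 hx1, (hasSum_sinc x hx0.ne').tsum_eq, sub_self]
  have := all_eq_zero 10 (by norm_num) r a (Real.exp 2 + 1)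
    (by positivity) hbound hzero
  rw [ha] at this
  simp only at this
  have hpow : ((-1 : ℝ)) ^ r ≠ 0 := by
    apply pow_ne_zero; norm_num
  have := mul_eq_zero.mp this
  rcases this with h | h
  · exact absurd h hpow
  · linarith

end ZTP

/-- For every positive integer `r`, `ζ({2}^r) = π^(2r) / (2r+1)!`. -/
theorem zeta_two_pow (r : ℕ) (hr : 0 < r) :
    mzv (List.replicate r 2) = Real.pi ^ (2 * r) / Nat.factorial (2 * r + 1) := by
  rw [ZTP.mzv_eq_tsum_f r, (ZTP.hasSum_f r).tsum_eq, ZTP.c_eq_b r]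
  rfl
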